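/- Let p be a picture over Σ and θ the set of all tiles of the bordered picture p̂. Then p̂ is regional if and only if the incidence graphs of both adjacency relations A_θ ∩ Σ² and A'_θ ∩ Σ² are acyclic, where A_θ = H_θ ∪ V_θ and A'_θ = H_θ⁻¹ ∪ V_θ, with H_θ relating x to y when some tile of θ has a row (x,y) with x ≠ y, and V_θ relating x to y when some tile has a column (x,y)ᵀ with x ≠ y. -/

import Mathlib

/-- The rectangle `{x..x'} × {y..y'}` of grid positions. -/
def rect (x y x' y' : ℕ) : Set (ℕ × ℕ) :=
  {q | x ≤ q.1 ∧ q.1 ≤ x' ∧ y ≤ q.2 ∧ q.2 ≤ y'}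

/-- A subdomain of the domain `{1..m} × {1..n}` of an `m×n` picture. -/
def IsSubdomain (m n : ℕ) (d : Set (ℕ × ℕ)) : Prop :=
  ∃ x y x' y', 1 ≤ x ∧ x ≤ x' ∧ x' ≤ m ∧ 1 ≤ y ∧ y ≤ y' ∧ y' ≤ n ∧
    d = rect x y x' y'

/-- `d` is a `C`-homogeneous region of the picture `f`. -/
def Homog {A : Type*} (f : ℕ × ℕ → A) (d : Set (ℕ × ℕ)) (C : A) : Prop :=
  ∀ q ∈ d, f q = C

/-- The two rectangles are horizontally or vertically adjacent (in either order). -/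
def RectAdj (d e : Set (ℕ × ℕ)) : Prop :=
  ∃ x y x' y' u v u' v',
    d = rect x y x' y' ∧ e = rect u v u' v' ∧
    x ≤ x' ∧ y ≤ y' ∧ u ≤ u' ∧ v ≤ v' ∧
    ((v = y' + 1 ∧ u' ≥ x ∧ x' ≥ u) ∨ (u = x' + 1 ∧ v' ≥ y ∧ y' ≥ v) ∨
     (y = v' + 1 ∧ x' ≥ u ∧ u' ≥ x) ∨ (x = u' + 1 ∧ y' ≥ v ∧ v' ≥ y))

/-- `π` is a partition of the region `D` into rectangles on which `f` is constant. -/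
def IsHomogPartitionOn {A : Type*} (D : Set (ℕ × ℕ)) (f : ℕ × ℕ → A)
    (π : Set (Set (ℕ × ℕ))) : Prop :=
  (∀ d ∈ π, ∃ x y x' y', x ≤ x' ∧ y ≤ y' ∧ d = rect x y x' y') ∧
  (∀ d ∈ π, ∃ C, Homog f d C) ∧
  (⋃₀ π = D) ∧
  (∀ d ∈ π, ∀ e ∈ π, d ≠ e → d ∩ e = ∅)

/-- `π` is a homogeneous partition of the whole `m×n` picture `f`. -/
def IsHomogPartition {A : Type*} (m n : ℕ) (f : ℕ × ℕ → A)
    (π : Set (Set (ℕ × ℕ))) : Prop :=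
  (∀ d ∈ π, IsSubdomain m n d) ∧ IsHomogPartitionOn (rect 1 1 m n) f π

/-- Strong: adjacent parts carry different labels. -/
def StrongOn {A : Type*} (f : ℕ × ℕ → A) (π : Set (Set (ℕ × ℕ))) : Prop :=
  ∀ d ∈ π, ∀ e ∈ π, d ≠ e → RectAdj d e →
    ∀ C₁ C₂, Homog f d C₁ → Homog f e C₂ → C₁ ≠ C₂

/-- Regional: distinct parts carry distinct labels. -/
def RegionalOn {A : Type*} (f : ℕ × ℕ → A) (π : Set (Set (ℕ × ℕ))) : Prop :=
  ∀ d ∈ π, ∀ e ∈ π, d ≠ e →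
    ∀ C₁ C₂, Homog f d C₁ → Homog f e C₂ → C₁ ≠ C₂

/-- A (nonempty) picture over alphabet `A`. -/
structure Pic (A : Type*) where
  rows : ℕ
  cols : ℕ
  rows_pos : 0 < rows
  cols_pos : 0 < cols
  val : Fin rows → Fin cols → A

/-- A tile: a 2×2 picture over `A ∪ {#}`; `none` plays the role of the border
symbol `#`.  Components: (top-left, top-right, bottom-left, bottom-right). -/
abbrev Tile (A : Type*) := Option A × Option A × Option A × Option A

/-- Pixel of the bordered picture `p̂`, with 1-based coordinates
`0 ≤ i ≤ rows+1`, `0 ≤ j ≤ cols+1`; the border carries `none` (i.e. `#`). -/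
def Pic.bval {A : Type*} (p : Pic A) (i j : ℕ) : Option A :=
  if h : 1 ≤ i ∧ i ≤ p.rows ∧ 1 ≤ j ∧ j ≤ p.cols then
    some (p.val ⟨i - 1, by omega⟩ ⟨j - 1, by omega⟩)
  else none

/-- The set `⟦p̂⟧` of all 2×2 subblocks of the bordered picture `p̂`. -/
def Pic.tiles {A : Type*} (p : Pic A) : Set (Tile A) :=
  {t | ∃ i j, i ≤ p.rows ∧ j ≤ p.cols ∧
    t = (p.bval i j, p.bval i (j + 1), p.bval (i + 1) j, p.bval (i + 1) (j + 1))}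

/-- The local language defined by a tile set `θ`. -/
def LOC {A : Type*} (θ : Set (Tile A)) : Set (Pic A) :=
  {p | p.tiles ⊆ θ}

/-- Horizontal adjacency relation `H_θ` extracted from a tile set. -/
def Hrel {A : Type*} (θ : Set (Tile A)) (x y : Option A) : Prop :=
  x ≠ y ∧ ∃ t ∈ θ, (t.1 = x ∧ t.2.1 = y) ∨ (t.2.2.1 = x ∧ t.2.2.2 = y)

/-- Vertical adjacency relation `V_θ` extracted from a tile set. -/
def Vrel {A : Type*} (θ : Set (Tile A)) (x y : Option A) : Prop :=
  x ≠ y ∧ ∃ t ∈ θ, (t.1 = x ∧ t.2.2.1 = y) ∨ (t.2.1 = x ∧ t.2.2.2 = y)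

/-- `A_θ ∩ Σ² = (H_θ ∪ V_θ) ∩ Σ²`. -/
def Arel {A : Type*} (θ : Set (Tile A)) (a b : A) : Prop :=
  Hrel θ (some a) (some b) ∨ Vrel θ (some a) (some b)

/-- `A'_θ ∩ Σ² = (H_θ⁻¹ ∪ V_θ) ∩ Σ²`. -/
def A'rel {A : Type*} (θ : Set (Tile A)) (a b : A) : Prop :=
  Hrel θ (some b) (some a) ∨ Vrel θ (some a) (some b)

/-- The incidence graph of a relation is acyclic: no directed cycle. -/
def RelAcyclic {α : Type*} (r : α → α → Prop) : Prop :=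
  ∀ a, ¬ Relation.TransGen r a a

/-- A tile set is simple regional: the incidence graphs of both adjacency
relations `A_θ ∩ Σ²` and `A'_θ ∩ Σ²` are acyclic. -/
def SimpleRegional {A : Type*} (θ : Set (Tile A)) : Prop :=
  RelAcyclic (Arel θ) ∧ RelAcyclic (A'rel θ)

/-- The picture `p` (equivalently its bordered version `p̂`) is regional: it
admits a homogeneous partition into rectangles with pairwise distinct labels. -/
def Pic.IsRegional {A : Type*} (p : Pic A) : Prop :=
  ∃ π, IsHomogPartition p.rows p.cols (fun q => p.bval q.1 q.2) π ∧
    RegionalOn (fun q => p.bval q.1 q.2) π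



namespace RLCore

open List Relation

variable {α : Type*}

/-! ### List helpers -/

lemma getLastD_append' (E1 E2 : List α) (x : α) :
    (E1 ++ E2).getLastD x = E2.getLastD (E1.getLastD x) := by
  induction E1 generalizing x with
  | nil => rfl
  | cons a E1 ih => simp only [List.cons_append, List.getLastD_cons, ih]

lemma chain_append' {R : α → α → Prop} :
    ∀ {x : α} {E1 E2 : List α}, Chain R x E1 → Chain R (E1.getLastD x) E2 →
      Chain R x (E1 ++ E2) := by
  intro x E1 E2 h1 h2
  induction E1 generalizing x with
  | nil => exact h2
  | cons a E1 ih =>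
    rcases (List.chain_cons.1 h1) with ⟨hxa, h1'⟩
    simp only [List.getLastD_cons] at h2
    exact List.chain_cons.2 ⟨hxa, ih h1' h2⟩

lemma chain_dropLast {R : α → α → Prop} :
    ∀ {x : α} {l : List α}, Chain R x l → Chain R x l.dropLast := by
  intro x l h
  induction l generalizing x with
  | nil => exact h
  | cons a l ih =>
    rcases List.chain_cons.1 h with ⟨hxa, h'⟩
    cases l with
    | nil => simp [List.Chain.nil]
    | cons b l' =>
      simp only [List.dropLast_cons₂]
      exact List.chain_cons.2 ⟨hxa, ih h'⟩

lemma chain_last_edge {R : α → α → Prop} :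
    ∀ {x : α} {l : List α}, Chain R x l → l ≠ [] →
      R (l.dropLast.getLastD x) (l.getLastD x) := by
  intro x l h hne
  induction l generalizing x with
  | nil => exact absurd rfl hne
  | cons a l ih =>
    rcases List.chain_cons.1 h with ⟨hxa, h'⟩
    cases l with
    | nil => simpa using hxa
    | cons b l' =>
      have h2 := ih h' (by simp)
      rw [List.dropLast_cons₂, List.getLastD_cons, List.getLastD_cons]
      exact h2

lemma getLastD_mem (l : List α) (x : α) : l.getLastD x ∈ x :: l := by
  induction l generalizing x with
  | nil => exact List.mem_cons_self
  | cons a l ih =>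
    rw [List.getLastD_cons]
    rcases (List.mem_cons).1 (ih a) with h | h
    · rw [h]; exact List.mem_cons_of_mem x List.mem_cons_self
    · exact List.mem_cons_of_mem x (List.mem_cons_of_mem a h)

lemma exists_max_key (key : α → ℕ) :
    ∀ (l : List α) (b : α), ∃ x ∈ b :: l, ∀ y ∈ b :: l, key y ≤ key x := by
  intro l
  induction l with
  | nil => intro b; exact ⟨b, by simp, by simp⟩
  | cons a l ih =>
    intro b
    obtain ⟨x, hx, hmax⟩ := ih a
    by_cases h : key x ≤ key b
    · refine ⟨b, List.mem_cons_self, ?_⟩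
      intro y hy
      rcases List.mem_cons.1 hy with rfl | hy
      · exact le_rfl
      · exact le_trans (hmax y hy) h
    · refine ⟨x, List.mem_cons_of_mem b hx, ?_⟩
      intro y hy
      rcases List.mem_cons.1 hy with rfl | hy
      · omega
      · exact hmax y hy

end RLCore

namespace RLCore2
open List Relation RLCore

section
variable {α : Type*} (m n : ℕ) (Occ : α → Prop) (X X' Y Y' : α → ℕ) (F : ℕ → ℕ → α)

/-- Abstract geometric relation: `u` strictly left of `v` with row overlap, or
`u` strictly above `v` with column overlap. -/
def Rel (u v : α) : Prop :=
  Occ u ∧ Occ v ∧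
    ((X u ≤ X' v ∧ X v ≤ X' u ∧ Y' u < Y v) ∨
     (Y u ≤ Y' v ∧ Y v ≤ Y' u ∧ X' u < X v))

lemma rel_irrefl
    (hb : ∀ a, Occ a → 1 ≤ X a ∧ X a ≤ X' a ∧ X' a ≤ m ∧ 1 ≤ Y a ∧ Y a ≤ Y' a ∧ Y' a ≤ n)
    (u : α) : ¬ Rel Occ X X' Y Y' u u := by
  rintro ⟨hu, _, h⟩
  obtain ⟨_, hX, _, _, hY, _⟩ := hb u hu
  rcases h with ⟨_, _, h⟩ | ⟨_, _, h⟩ <;> omega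

lemma rel_not_both {u v : α}
    (hb : ∀ a, Occ a → 1 ≤ X a ∧ X a ≤ X' a ∧ X' a ≤ m ∧ 1 ≤ Y a ∧ Y a ≤ Y' a ∧ Y' a ≤ n)
    (h1 : Rel Occ X X' Y Y' u v) (h2 : Rel Occ X X' Y Y' v u) : False := by
  obtain ⟨hu, hv, c1⟩ := h1
  obtain ⟨_, _, c2⟩ := h2
  obtain ⟨_, hXu, _, _, hYu, _⟩ := hb u hu
  obtain ⟨_, hXv, _, _, hYv, _⟩ := hb v hv
  rcases c1 with ⟨a1, a2, a3⟩ | ⟨a1, a2, a3⟩ <;> rcases c2 with ⟨b1, b2, b3⟩ | ⟨b1, b2, b3⟩ <;> omega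

/-- Horizontally adjacent cells with distinct owners give an edge. -/
lemma edgeH
    (hown : ∀ a, Occ a → ∀ i j, X a ≤ i → i ≤ X' a → Y a ≤ j → j ≤ Y' a → F i j = a)
    (hocc : ∀ i j, 1 ≤ i → i ≤ m → 1 ≤ j → j ≤ n →
      Occ (F i j) ∧ X (F i j) ≤ i ∧ i ≤ X' (F i j) ∧ Y (F i j) ≤ j ∧ j ≤ Y' (F i j))
    {i j : ℕ} (h1i : 1 ≤ i) (him : i ≤ m) (h1j : 1 ≤ j) (hjn : j + 1 ≤ n)
    (hne : F i j ≠ F i (j+1)) : Rel Occ X X' Y Y' (F i j) (F i (j+1)) := by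
  obtain ⟨hu, hXu, hXu', hYu, hYu'⟩ := hocc i j h1i him h1j (by omega)
  obtain ⟨hv, hXv, hXv', hYv, hYv'⟩ := hocc i (j+1) h1i him (by omega) hjn
  refine ⟨hu, hv, Or.inl ⟨le_trans hXu hXv', le_trans hXv hXu', ?_⟩⟩
  by_contra hle
  push_neg at hle
  have h1 : j + 1 ≤ Y' (F i j) := by
    by_contra h
    push_neg at h
    have : F i j = F i (j+1) := hown _ hv i j hXv hXv' (by omega) (by omega)
    exact hne this
  have : F i (j+1) = F i j := hown _ hu i (j+1) hXu hXu' (by omega) h1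
  exact hne this.symm

/-- Vertically adjacent cells with distinct owners give an edge. -/
lemma edgeV
    (hown : ∀ a, Occ a → ∀ i j, X a ≤ i → i ≤ X' a → Y a ≤ j → j ≤ Y' a → F i j = a)
    (hocc : ∀ i j, 1 ≤ i → i ≤ m → 1 ≤ j → j ≤ n →
      Occ (F i j) ∧ X (F i j) ≤ i ∧ i ≤ X' (F i j) ∧ Y (F i j) ≤ j ∧ j ≤ Y' (F i j))
    {i j : ℕ} (h1i : 1 ≤ i) (him : i + 1 ≤ m) (h1j : 1 ≤ j) (hjn : j ≤ n)
    (hne : F i j ≠ F (i+1) j) : Rel Occ X X' Y Y' (F i j) (F (i+1) j) := by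
  obtain ⟨hu, hXu, hXu', hYu, hYu'⟩ := hocc i j h1i (by omega) h1j hjn
  obtain ⟨hv, hXv, hXv', hYv, hYv'⟩ := hocc (i+1) j (by omega) him h1j hjn
  refine ⟨hu, hv, Or.inr ⟨le_trans hYu hYv', le_trans hYv hYu', ?_⟩⟩
  by_contra hle
  push_neg at hle
  have h1 : i + 1 ≤ X' (F i j) := by
    by_contra h
    push_neg at h
    have : F i j = F (i+1) j := hown _ hv i j (by omega) (by omega) hYv hYv'
    exact hne this
  have : F (i+1) j = F i j := hown _ hu (i+1) j (by omega) h1 hYu hYu'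
  exact hne this.symm

lemma chainV
    (hown : ∀ a, Occ a → ∀ i j, X a ≤ i → i ≤ X' a → Y a ≤ j → j ≤ Y' a → F i j = a)
    (hocc : ∀ i j, 1 ≤ i → i ≤ m → 1 ≤ j → j ≤ n →
      Occ (F i j) ∧ X (F i j) ≤ i ∧ i ≤ X' (F i j) ∧ Y (F i j) ≤ j ∧ j ≤ Y' (F i j))
    (j : ℕ) (h1j : 1 ≤ j) (hjn : j ≤ n) (r : ℕ) (h1r : 1 ≤ r) :
    ∀ k, r + k ≤ m → ∃ E : List α, E.length ≤ k ∧ Chain (Rel Occ X X' Y Y') (F r j) E ∧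
      E.getLastD (F r j) = F (r+k) j ∧ ∀ e ∈ E, ∃ t, r < t ∧ t ≤ r + k ∧ e = F t j := by
  intro k
  induction k with
  | zero => intro _; exact ⟨[], by simp, List.Chain.nil, rfl, by simp⟩
  | succ k ih =>
    intro hkm
    obtain ⟨E, hlen, hch, hlast, hmem⟩ := ih (by omega)
    by_cases heq : F (r+(k+1)) j = F (r+k) j
    · refine ⟨E, by omega, hch, ?_, ?_⟩
      · rw [hlast, heq]
      · intro e he; obtain ⟨t, h1, h2, h3⟩ := hmem e he; exact ⟨t, h1, by omega, h3⟩
    · have hedge : Rel Occ X X' Y Y' (F (r+k) j) (F (r+k+1) j) := by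
        have := edgeV m n Occ X X' Y Y' F hown hocc (i := r+k) (j := j)
          (by omega) (by omega) h1j hjn (fun h => heq h.symm)
        exact this
      refine ⟨E ++ [F (r+(k+1)) j], by simp; omega, ?_, ?_, ?_⟩
      · refine chain_append' hch ?_
        rw [hlast]
        exact List.Chain.cons (by show Rel Occ X X' Y Y' _ _; convert hedge using 2 <;> omega)
          List.Chain.nil
      · rw [getLastD_append']; rfl
      · intro e he
        rcases List.mem_append.1 he with he | he
        · obtain ⟨t, h1, h2, h3⟩ := hmem e he; exact ⟨t, h1, by omega, h3⟩
        · simp at he; exact ⟨r + (k+1), by omega, by omega, he⟩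

lemma chainH
    (hown : ∀ a, Occ a → ∀ i j, X a ≤ i → i ≤ X' a → Y a ≤ j → j ≤ Y' a → F i j = a)
    (hocc : ∀ i j, 1 ≤ i → i ≤ m → 1 ≤ j → j ≤ n →
      Occ (F i j) ∧ X (F i j) ≤ i ∧ i ≤ X' (F i j) ∧ Y (F i j) ≤ j ∧ j ≤ Y' (F i j))
    (i : ℕ) (h1i : 1 ≤ i) (him : i ≤ m) (c : ℕ) (h1c : 1 ≤ c) :
    ∀ k, c + k ≤ n → ∃ E : List α, E.length ≤ k ∧ Chain (Rel Occ X X' Y Y') (F i c) E ∧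
      E.getLastD (F i c) = F i (c+k) ∧ ∀ e ∈ E, ∃ t, c < t ∧ t ≤ c + k ∧ e = F i t := by
  intro k
  induction k with
  | zero => intro _; exact ⟨[], by simp, List.Chain.nil, rfl, by simp⟩
  | succ k ih =>
    intro hkn
    obtain ⟨E, hlen, hch, hlast, hmem⟩ := ih (by omega)
    by_cases heq : F i (c+(k+1)) = F i (c+k)
    · refine ⟨E, by omega, hch, ?_, ?_⟩
      · rw [hlast, heq]
      · intro e he; obtain ⟨t, h1, h2, h3⟩ := hmem e he; exact ⟨t, h1, by omega, h3⟩
    · have hedge : Rel Occ X X' Y Y' (F i (c+k)) (F i (c+k+1)) := by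
        exact edgeH m n Occ X X' Y Y' F hown hocc (i := i) (j := c+k)
          h1i him (by omega) (by omega) (fun h => heq h.symm)
      refine ⟨E ++ [F i (c+(k+1))], by simp; omega, ?_, ?_, ?_⟩
      · refine chain_append' hch ?_
        rw [hlast]
        exact List.Chain.cons (by show Rel Occ X X' Y Y' _ _; convert hedge using 2 <;> omega)
          List.Chain.nil
      · rw [getLastD_append']; rfl
      · intro e he
        rcases List.mem_append.1 he with he | he
        · obtain ⟨t, h1, h2, h3⟩ := hmem e he; exact ⟨t, h1, by omega, h3⟩
        · simp at he; exact ⟨c + (k+1), by omega, by omega, he⟩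

end

section Cycles
variable {α : Type*}

/-- A directed cycle: a chain starting at `b` whose last element points back to `b`. -/
def Cyc (R : α → α → Prop) (b : α) (l : List α) : Prop :=
  Chain R b l ∧ R (l.getLastD b) b

/-- Weighted measure of a list. -/
def Mw (B : ℕ) (Yf : α → ℕ) (l : List α) : ℕ := (l.map fun u => B ^ Yf u).sum

lemma mw_cons (B : ℕ) (Yf : α → ℕ) (x : α) (l : List α) :
    Mw B Yf (x :: l) = B ^ Yf x + Mw B Yf l := by simp [Mw]

lemma mw_append (B : ℕ) (Yf : α → ℕ) (l1 l2 : List α) :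
    Mw B Yf (l1 ++ l2) = Mw B Yf l1 + Mw B Yf l2 := by simp [Mw]

lemma mw_perm (B : ℕ) (Yf : α → ℕ) {l l' : List α} (h : l.Perm l') :
    Mw B Yf l = Mw B Yf l' := (h.map _).sum_eq

lemma mw_bound (B : ℕ) (Yf : α → ℕ) (c : ℕ) :
    ∀ (l : List α), (∀ e ∈ l, Yf e ≤ c) → B ≥ 1 → Mw B Yf l ≤ l.length * B ^ c := by
  intro l hl hB
  induction l with
  | nil => simp [Mw]
  | cons x l ih =>
    rw [mw_cons]
    have h1 : B ^ Yf x ≤ B ^ c := Nat.pow_le_pow_right hB (hl x (by simp))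
    have h2 := ih (fun e he => hl e (List.mem_cons_of_mem x he))
    simp only [List.length_cons]
    calc B ^ Yf x + Mw B Yf l ≤ B ^ c + l.length * B ^ c := by omega
    _ = (l.length + 1) * B ^ c := by ring

lemma cyc_rot1 {R : α → α → Prop} {b x : α} {xs : List α} (h : Cyc R b (x :: xs)) :
    Cyc R x (xs ++ [b]) := by
  obtain ⟨hch, hwrap⟩ := h
  obtain ⟨hbx, hch'⟩ := List.chain_cons.1 hch
  rw [List.getLastD_cons] at hwrap
  constructor
  · exact chain_append' hch' (List.Chain.cons hwrap List.Chain.nil)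
  · rw [getLastD_append']
    exact hbx

lemma cyc_to_front {R : α → α → Prop} (x : α) :
    ∀ (l1 : List α) (b : α) (l2 : List α), Cyc R b (l1 ++ x :: l2) →
      ∃ l', Cyc R x l' ∧ (x :: l').Perm (b :: (l1 ++ x :: l2)) := by
  intro l1
  induction l1 with
  | nil =>
    intro b l2 h
    refine ⟨l2 ++ [b], cyc_rot1 h, ?_⟩
    have : x :: (l2 ++ [b]) = (x :: l2) ++ [b] := by simp
    rw [this]
    exact List.perm_append_singleton b (x :: l2)
  | cons h1 t1 ih =>
    intro b l2 hcyc
    have hrw : (h1 :: t1) ++ x :: l2 = h1 :: (t1 ++ x :: l2) := by simp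
    rw [hrw] at hcyc
    have hcyc2 : Cyc R h1 ((t1 ++ x :: l2) ++ [b]) := cyc_rot1 hcyc
    have hrw2 : (t1 ++ x :: l2) ++ [b] = t1 ++ x :: (l2 ++ [b]) := by simp
    rw [hrw2] at hcyc2
    obtain ⟨l', hcyc', hperm⟩ := ih h1 (l2 ++ [b]) hcyc2
    refine ⟨l', hcyc', ?_⟩
    refine hperm.trans ?_
    calc h1 :: (t1 ++ x :: (l2 ++ [b]))
        = h1 :: ((t1 ++ x :: l2) ++ [b]) := by simp
      _ ~ h1 :: (b :: (t1 ++ x :: l2)) :=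
          List.Perm.cons h1 (List.perm_append_singleton b (t1 ++ x :: l2))
      _ ~ b :: (h1 :: (t1 ++ x :: l2)) := List.Perm.swap b h1 _
      _ = b :: ((h1 :: t1) ++ x :: l2) := by simp

lemma transGen_path {R : α → α → Prop} {u v : α} (h : Relation.TransGen R u v) :
    ∃ l, Chain R u l ∧ l ≠ [] ∧ l.getLastD u = v := by
  induction h with
  | single h => exact ⟨[_], List.Chain.cons h List.Chain.nil, by simp, rfl⟩
  | @tail w v' _ hwv ih =>
    obtain ⟨l, hch, hne, hlast⟩ := ih
    refine ⟨l ++ [v'], chain_append' hch ?_, by simp, ?_⟩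
    · rw [hlast]; exact List.Chain.cons hwv List.Chain.nil
    · rw [getLastD_append']; rfl

lemma key_lemma {m yu xu yv xv : ℕ} (hxu : xu ≤ m) (hxv : xv ≤ m)
    (h : (m+1) * yu + xu ≤ (m+1) * yv + xv) : yu ≤ yv ∧ (yu = yv → xu ≤ xv) := by
  constructor
  · by_contra hc
    push_neg at hc
    have h2 : (m+1) * (yv+1) ≤ (m+1) * yu := Nat.mul_le_mul_left _ hc
    have h3 : (m+1) * (yv+1) = (m+1)*yv + (m+1) := by ring
    linarith
  · intro he
    subst he
    exact le_of_add_le_add_left h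

end Cycles

section Main
variable {α : Type*} (m n : ℕ) (Occ : α → Prop) (X X' Y Y' : α → ℕ) (F : ℕ → ℕ → α)

theorem no_cycle
    (hb : ∀ a, Occ a → 1 ≤ X a ∧ X a ≤ X' a ∧ X' a ≤ m ∧ 1 ≤ Y a ∧ Y a ≤ Y' a ∧ Y' a ≤ n)
    (hown : ∀ a, Occ a → ∀ i j, X a ≤ i → i ≤ X' a → Y a ≤ j → j ≤ Y' a → F i j = a)
    (hocc : ∀ i j, 1 ≤ i → i ≤ m → 1 ≤ j → j ≤ n →
      Occ (F i j) ∧ X (F i j) ≤ i ∧ i ≤ X' (F i j) ∧ Y (F i j) ≤ j ∧ j ≤ Y' (F i j)) :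
    ∀ (N : ℕ) (b : α) (l : List α), Cyc (Rel Occ X X' Y Y') b l →
      Mw (m+n+2) Y (b :: l) ≤ N → False := by
  intro N
  induction N using Nat.strong_induction_on with
  | _ N IH =>
  set R := Rel Occ X X' Y Y' with hR
  set B := m + n + 2 with hB
  set key : α → ℕ := fun u => (m+1) * Y u + X u with hkey
  have main : ∀ (b : α) (l : List α), Cyc R b l → (∀ y ∈ b :: l, key y ≤ key b) →
      Mw B Y (b :: l) ≤ N → False := by
    intro b l hcyc hmax hM
    obtain ⟨hch, hwrap⟩ := hcyc
    cases l with
    | nil => exact rel_irrefl m n Occ X X' Y Y' hb b hwrap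
    | cons c t' =>
      have ebc : R b c := (List.chain_cons.1 hch).1
      have hcht : Chain R c t' := (List.chain_cons.1 hch).2
      have eab : R (t'.getLastD c) b := by rw [List.getLastD_cons] at hwrap; exact hwrap
      set a := t'.getLastD c with ha
      obtain ⟨hOb, hOc, e1⟩ := id ebc
      obtain ⟨hOa, -, e2⟩ := id eab
      obtain ⟨hXb1, hXb2, hXb3, hYb1, hYb2, hYb3⟩ := hb b hOb
      obtain ⟨hXc1, hXc2, hXc3, hYc1, hYc2, hYc3⟩ := hb c hOc
      obtain ⟨hXa1, hXa2, hXa3, hYa1, hYa2, hYa3⟩ := hb a hOa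
      have hamem : a ∈ b :: c :: t' := List.mem_cons_of_mem b (getLastD_mem t' c)
      obtain ⟨hkc1, hkc2⟩ := key_lemma (le_trans hXc2 hXc3) (le_trans hXb2 hXb3)
        (hmax c (by simp))
      obtain ⟨hka1, hka2⟩ := key_lemma (le_trans hXa2 hXa3) (le_trans hXb2 hXb3) (hmax a hamem)
      -- the out-edge must be V-type
      rcases e1 with ⟨f1, f2, f3⟩ | ⟨g1, g2, g3⟩
      · omega
      -- g1 : Y b ≤ Y' c, g2 : Y c ≤ Y' b, g3 : X' b < X c
      have hYcb : Y c < Y b := by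
        rcases Nat.lt_or_ge (Y c) (Y b) with h | h
        · exact h
        · have := hkc2 (by omega)
          omega
      by_cases hac : a = c
      · refine rel_not_both m n Occ X X' Y Y' hb ⟨hOb, hOc, Or.inr ⟨g1, g2, g3⟩⟩ ?_
        rw [hac] at eab; exact eab
      have hMsplit : Mw B Y (b :: c :: t') = B ^ Y b + Mw B Y (c :: t') := mw_cons B Y b _
      have hBpos : 1 ≤ B ^ Y b := Nat.one_le_pow _ _ (by omega)
      rcases e2 with ⟨k1, k2, k3⟩ | ⟨k1, k2, k3⟩
      · -- in-edge H-type: k1 : X a ≤ X' b, k2 : X b ≤ X' a, k3 : Y' a < Y b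
        by_cases hXc : X c ≤ X' a
        · by_cases hYc' : Y c ≤ Y' a
          · -- the rectangles of a and c would intersect: contradiction
            have hfa : F (X c) (max (Y a) (Y c)) = a :=
              hown a hOa _ _ (by omega) hXc (le_max_left _ _) (by omega)
            have hfc : F (X c) (max (Y a) (Y c)) = c :=
              hown c hOc _ _ le_rfl hXc2 (le_max_right _ _) (by omega)
            exact hac (hfa.symm.trans hfc)
          · push_neg at hYc'
            have eac : R a c := ⟨hOa, hOc, Or.inl ⟨by omega, hXc, hYc'⟩⟩
            refine IH (Mw B Y (c :: t')) (by omega) c t' ⟨hcht, ?_⟩ le_rfl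
            rw [← ha]; exact eac
        · -- reroute through the cells below `a` and left of `b`
          push_neg at hXc
          have hFa : F (X' a) (Y' a) = a := hown a hOa _ _ hXa2 le_rfl hYa2 le_rfl
          obtain ⟨E1, hlen1, hch1, hlast1, hmem1⟩ :=
            chainV m n Occ X X' Y Y' F hown hocc (Y' a) (by omega) hYa3 (X' a) (by omega)
              (X c - X' a) (by omega)
          obtain ⟨E2, hlen2, hch2, hlast2, hmem2⟩ :=
            chainH m n Occ X X' Y Y' F hown hocc (X c) (by omega) (by omega) (Y' a) (by omega)
              (Y b - 1 - Y' a) (by omega)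
          have hXcc : X' a + (X c - X' a) = X c := by omega
          have hYbb : Y' a + (Y b - 1 - Y' a) = Y b - 1 := by omega
          rw [hXcc] at hlast1 hmem1
          rw [hYbb] at hlast2 hmem2
          rw [hFa] at hch1 hlast1
          have hFc : F (X c) (Y b - 1) = c := hown c hOc _ _ le_rfl hXc2 (by omega) (by omega)
          have hchE : Chain R (a : α) (E1 ++ E2) := chain_append' hch1 (by rw [hlast1]; exact hch2)
          have hlastE : (E1 ++ E2).getLastD a = c := by
            rw [getLastD_append', hlast1, hlast2, hFc]
          have hEne : E1 ++ E2 ≠ [] := by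
            intro h
            rw [h] at hlastE
            exact hac hlastE
          have hchD : Chain R a (E1 ++ E2).dropLast := chain_dropLast hchE
          have hwrapD : R ((t' ++ (E1 ++ E2).dropLast).getLastD c) c := by
            rw [getLastD_append', ← ha]
            have h2 := chain_last_edge hchE hEne
            rw [hlastE] at h2
            exact h2
          have hcycNew : Cyc R c (t' ++ (E1 ++ E2).dropLast) :=
            ⟨chain_append' hcht (by rw [← ha]; exact hchD), hwrapD⟩
          have hYE : ∀ e ∈ E1 ++ E2, Y e ≤ Y b - 1 := by
            intro e he
            rcases List.mem_append.1 he with he | he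
            · obtain ⟨t, ht1, ht2, rfl⟩ := hmem1 e he
              have := (hocc t (Y' a) (by omega) (by omega) (by omega) hYa3).2.2.2.1
              omega
            · obtain ⟨t, ht1, ht2, rfl⟩ := hmem2 e he
              have := (hocc (X c) t (by omega) (by omega) (by omega) (by omega)).2.2.2.1
              omega
          have hMD : Mw B Y (E1 ++ E2).dropLast ≤ (m+n) * B ^ (Y b - 1) := by
            have hsub : ∀ e ∈ (E1 ++ E2).dropLast, Y e ≤ Y b - 1 :=
              fun e he => hYE e ((List.dropLast_sublist (E1 ++ E2)).subset he)
            have h1 := mw_bound B Y (Y b - 1) (E1 ++ E2).dropLast hsub (by omega)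
            have h2 : (E1 ++ E2).dropLast.length ≤ m + n := by
              rw [List.length_dropLast, List.length_append]
              omega
            exact le_trans h1 (Nat.mul_le_mul_right _ h2)
          have hlt : (m+n) * B ^ (Y b - 1) < B ^ Y b := by
            have hsucc : B ^ Y b = B * B ^ (Y b - 1) := by
              rw [← pow_succ']
              congr 1
              omega
            have hPpos : 0 < B ^ (Y b - 1) := Nat.pow_pos (by omega)
            rw [hsucc]
            exact (Nat.mul_lt_mul_right hPpos).mpr (by omega)
          have hMnew : Mw B Y (c :: (t' ++ (E1 ++ E2).dropLast)) < Mw B Y (b :: c :: t') := by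
            rw [mw_cons, mw_append, hMsplit, mw_cons]
            omega
          exact IH (Mw B Y (c :: (t' ++ (E1 ++ E2).dropLast))) (by omega) c _ hcycNew le_rfl
      · -- in-edge V-type: k1 : Y a ≤ Y' b, k2 : Y b ≤ Y' a, k3 : X' a < X b
        have eac : R a c := ⟨hOa, hOc, Or.inr ⟨by omega, by omega, by omega⟩⟩
        refine IH (Mw B Y (c :: t')) (by omega) c t' ⟨hcht, ?_⟩ le_rfl
        rw [← ha]; exact eac
  intro b l hcyc hM
  obtain ⟨x, hxmem, hxmax⟩ := exists_max_key key l b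
  rcases List.mem_cons.1 hxmem with rfl | hxl
  · exact main x l hcyc hxmax hM
  · obtain ⟨s, t, rfl⟩ := List.append_of_mem hxl
    obtain ⟨l', hcyc', hperm⟩ := cyc_to_front x s b t hcyc
    refine main x l' hcyc' ?_ ?_
    · intro y hy
      exact hxmax y (hperm.mem_iff.1 hy)
    · rw [mw_perm B Y hperm]; exact hM

/-- The abstract acyclicity theorem. -/
theorem core_acyclic
    (hb : ∀ a, Occ a → 1 ≤ X a ∧ X a ≤ X' a ∧ X' a ≤ m ∧ 1 ≤ Y a ∧ Y a ≤ Y' a ∧ Y' a ≤ n)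
    (hown : ∀ a, Occ a → ∀ i j, X a ≤ i → i ≤ X' a → Y a ≤ j → j ≤ Y' a → F i j = a)
    (hocc : ∀ i j, 1 ≤ i → i ≤ m → 1 ≤ j → j ≤ n →
      Occ (F i j) ∧ X (F i j) ≤ i ∧ i ≤ X' (F i j) ∧ Y (F i j) ≤ j ∧ j ≤ Y' (F i j)) :
    ∀ a, ¬ Relation.TransGen (Rel Occ X X' Y Y') a a := by
  intro a hTG
  obtain ⟨l, hch, hne, hlast⟩ := transGen_path hTG
  have hwrap : Rel Occ X X' Y Y' (l.dropLast.getLastD a) a := by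
    have h2 := chain_last_edge hch hne
    rw [hlast] at h2
    exact h2
  exact no_cycle m n Occ X X' Y Y' F hb hown hocc (Mw (m+n+2) Y (a :: l.dropLast)) a l.dropLast
    ⟨chain_dropLast hch, hwrap⟩ le_rfl

end Main
end RLCore2


section PicGlue

open Relation

variable {A : Type*}

/-- Total version of the picture's pixel function (1-based coordinates). -/
def pval (p : Pic A) (i j : ℕ) : A :=
  if h : 1 ≤ i ∧ i ≤ p.rows ∧ 1 ≤ j ∧ j ≤ p.cols then
    p.val ⟨i - 1, by omega⟩ ⟨j - 1, by omega⟩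
  else
    p.val ⟨0, p.rows_pos⟩ ⟨0, p.cols_pos⟩

lemma bval_eq_some (p : Pic A) {i j : ℕ} (h : 1 ≤ i ∧ i ≤ p.rows ∧ 1 ≤ j ∧ j ≤ p.cols) :
    p.bval i j = some (pval p i j) := by
  rw [Pic.bval, pval, dif_pos h, dif_pos h]

lemma bval_some_iff (p : Pic A) {i j : ℕ} {a : A} :
    p.bval i j = some a ↔ (1 ≤ i ∧ i ≤ p.rows ∧ 1 ≤ j ∧ j ≤ p.cols) ∧ pval p i j = a := by
  constructor
  · intro h
    by_cases hb : 1 ≤ i ∧ i ≤ p.rows ∧ 1 ≤ j ∧ j ≤ p.cols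
    · refine ⟨hb, ?_⟩
      rw [bval_eq_some p hb] at h
      exact Option.some_injective _ h
    · rw [Pic.bval, dif_neg hb] at h
      exact absurd h (by simp)
  · rintro ⟨hb, rfl⟩
    exact bval_eq_some p hb

/-- The symbol `a` occurs in the picture `p`. -/
def POcc (p : Pic A) (a : A) : Prop :=
  ∃ i j, (1 ≤ i ∧ i ≤ p.rows ∧ 1 ≤ j ∧ j ≤ p.cols) ∧ pval p i j = a

/-- Every level set of the picture is a rectangle. -/
def RectLevels (p : Pic A) : Prop :=
  ∀ a, POcc p a → ∃ x y x' y',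
    1 ≤ x ∧ x ≤ x' ∧ x' ≤ p.rows ∧ 1 ≤ y ∧ y ≤ y' ∧ y' ≤ p.cols ∧
    ∀ i j, (pval p i j = a ∧ 1 ≤ i ∧ i ≤ p.rows ∧ 1 ≤ j ∧ j ≤ p.cols) ↔
      (x ≤ i ∧ i ≤ x' ∧ y ≤ j ∧ j ≤ y')

lemma rect_mem {x y x' y' : ℕ} {q : ℕ × ℕ} :
    q ∈ rect x y x' y' ↔ x ≤ q.1 ∧ q.1 ≤ x' ∧ y ≤ q.2 ∧ q.2 ≤ y' := Iff.rfl

/-- Part 0a : a regional picture has rectangular level sets. -/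
lemma rectLevels_of_regional (p : Pic A) (h : p.IsRegional) : RectLevels p := by
  obtain ⟨π, ⟨hsub, hrects, hhom, hcover, hdisj⟩, hreg⟩ := h
  intro a ⟨i0, j0, hb0, hv0⟩
  have hq0 : ((i0, j0) : ℕ × ℕ) ∈ rect 1 1 p.rows p.cols := by
    rw [rect_mem]; exact ⟨hb0.1, hb0.2.1, hb0.2.2.1, hb0.2.2.2⟩
  rw [← hcover] at hq0
  obtain ⟨d, hdπ, hq0d⟩ := hq0
  obtain ⟨x, y, x', y', h1x, hxx, hxm, h1y, hyy, hyn, hd⟩ := hsub d hdπ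
  obtain ⟨C, hC⟩ := hhom d hdπ
  have hCa : C = some a := by
    have h2 := hC _ hq0d
    simp only at h2
    rw [bval_eq_some p hb0, hv0] at h2
    exact h2.symm
  refine ⟨x, y, x', y', h1x, hxx, hxm, h1y, hyy, hyn, ?_⟩
  intro i j
  constructor
  · rintro ⟨hv, hb⟩
    -- (i,j) lies in some part e; e must equal d
    have hqD : ((i, j) : ℕ × ℕ) ∈ rect 1 1 p.rows p.cols := by
      rw [rect_mem]; exact ⟨hb.1, hb.2.1, hb.2.2.1, hb.2.2.2⟩
    rw [← hcover] at hqD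
    obtain ⟨e, heπ, hqe⟩ := hqD
    obtain ⟨C', hC'⟩ := hhom e heπ
    have hC'a : C' = some a := by
      have h2 := hC' _ hqe
      simp only at h2
      rw [bval_eq_some p ⟨hb.1, hb.2.1, hb.2.2.1, hb.2.2.2⟩, hv] at h2
      exact h2.symm
    have hed : e = d := by
      by_contra hne
      exact hreg e heπ d hdπ hne C' C hC' hC (by rw [hC'a, hCa])
    rw [hed, hd] at hqe
    exact hqe
  · intro hbox
    have hij : ((i,j) : ℕ × ℕ) ∈ d := by rw [hd]; exact hbox
    have hDij : 1 ≤ i ∧ i ≤ p.rows ∧ 1 ≤ j ∧ j ≤ p.cols := by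
      obtain ⟨h1, h2, h3, h4⟩ := hbox
      exact ⟨by omega, by omega, by omega, by omega⟩
    have h2 := hC _ hij
    simp only at h2
    rw [hCa, bval_eq_some p hDij] at h2
    exact ⟨Option.some_injective _ h2, hDij.1, hDij.2.1, hDij.2.2.1, hDij.2.2.2⟩

/-- Part 0b : rectangular level sets give a regional partition. -/
lemma regional_of_rectLevels (p : Pic A) (h : RectLevels p) : p.IsRegional := by
  classical
  -- choose the rectangle data
  have h' : ∀ a, ∃ x y x' y', POcc p a →
      1 ≤ x ∧ x ≤ x' ∧ x' ≤ p.rows ∧ 1 ≤ y ∧ y ≤ y' ∧ y' ≤ p.cols ∧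
      ∀ i j, (pval p i j = a ∧ 1 ≤ i ∧ i ≤ p.rows ∧ 1 ≤ j ∧ j ≤ p.cols) ↔
        (x ≤ i ∧ i ≤ x' ∧ y ≤ j ∧ j ≤ y') := by
    intro a
    by_cases ha : POcc p a
    · obtain ⟨x, y, x', y', hs⟩ := h a ha
      exact ⟨x, y, x', y', fun _ => hs⟩
    · exact ⟨0, 0, 0, 0, fun hc => absurd hc ha⟩
  choose Xf Yf Xf' Yf' hspec using h'
  set π : Set (Set (ℕ × ℕ)) :=
    {d | ∃ a, POcc p a ∧ d = rect (Xf a) (Yf a) (Xf' a) (Yf' a)} with hπ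
  have hmem_iff : ∀ a, POcc p a → ∀ i j,
      ((i, j) : ℕ × ℕ) ∈ rect (Xf a) (Yf a) (Xf' a) (Yf' a) ↔
      (pval p i j = a ∧ 1 ≤ i ∧ i ≤ p.rows ∧ 1 ≤ j ∧ j ≤ p.cols) := by
    intro a ha i j
    rw [rect_mem]
    exact ((hspec a ha).2.2.2.2.2.2 i j).symm
  refine ⟨π, ⟨?_, ?_, ?_, ?_, ?_⟩, ?_⟩
  · -- subdomains
    rintro d ⟨a, ha, rfl⟩
    obtain ⟨h1, h2, h3, h4, h5, h6, _⟩ := hspec a ha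
    exact ⟨Xf a, Yf a, Xf' a, Yf' a, h1, h2, h3, h4, h5, h6, rfl⟩
  · -- rectangles
    rintro d ⟨a, ha, rfl⟩
    obtain ⟨h1, h2, h3, h4, h5, h6, _⟩ := hspec a ha
    exact ⟨Xf a, Yf a, Xf' a, Yf' a, h2, h5, rfl⟩
  · -- homogeneous
    rintro d ⟨a, ha, rfl⟩
    refine ⟨some a, ?_⟩
    rintro ⟨i, j⟩ hq
    obtain ⟨hv, hb⟩ := (hmem_iff a ha i j).1 hq
    show p.bval i j = some a
    rw [bval_eq_some p ⟨hb.1, hb.2.1, hb.2.2.1, hb.2.2.2⟩, hv]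
  · -- cover
    apply Set.eq_of_subset_of_subset
    · rintro q ⟨d, ⟨a, ha, rfl⟩, hq⟩
      obtain ⟨-, hb⟩ := (hmem_iff a ha q.1 q.2).1 hq
      rw [rect_mem]
      exact ⟨hb.1, hb.2.1, hb.2.2.1, hb.2.2.2⟩
    · rintro ⟨i, j⟩ hq
      rw [rect_mem] at hq
      have hb : 1 ≤ i ∧ i ≤ p.rows ∧ 1 ≤ j ∧ j ≤ p.cols := ⟨hq.1, hq.2.1, hq.2.2.1, hq.2.2.2⟩
      set a := pval p i j with hva
      have ha : POcc p a := ⟨i, j, hb, rfl⟩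
      refine ⟨rect (Xf a) (Yf a) (Xf' a) (Yf' a), ⟨a, ha, rfl⟩, ?_⟩
      exact (hmem_iff a ha i j).2 ⟨rfl, hb.1, hb.2.1, hb.2.2.1, hb.2.2.2⟩
  · -- disjoint
    rintro d ⟨a, ha, rfl⟩ e ⟨a', ha', rfl⟩ hne
    apply Set.eq_empty_iff_forall_notMem.2
    rintro ⟨i, j⟩ ⟨hq1, hq2⟩
    have h1 := ((hmem_iff a ha i j).1 hq1).1
    have h2 := ((hmem_iff a' ha' i j).1 hq2).1
    exact hne (by rw [← h1, ← h2])
  · -- regional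
    rintro d ⟨a, ha, rfl⟩ e ⟨a', ha', rfl⟩ hne C₁ C₂ hC₁ hC₂
    obtain ⟨h1, h2, h3, h4, h5, h6, -⟩ := hspec a ha
    obtain ⟨g1, g2, g3, g4, g5, g6, -⟩ := hspec a' ha'
    have hc1 : ((Xf a, Yf a) : ℕ × ℕ) ∈ rect (Xf a) (Yf a) (Xf' a) (Yf' a) := by
      rw [rect_mem]; exact ⟨le_rfl, h2, le_rfl, h5⟩
    have hc2 : ((Xf a', Yf a') : ℕ × ℕ) ∈ rect (Xf a') (Yf a') (Xf' a') (Yf' a') := by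
      rw [rect_mem]; exact ⟨le_rfl, g2, le_rfl, g5⟩
    have hv1 := (hmem_iff a ha (Xf a) (Yf a)).1 hc1
    have hv2 := (hmem_iff a' ha' (Xf a') (Yf a')).1 hc2
    have e1 : C₁ = some a := by
      have h2 := hC₁ _ hc1
      simp only at h2
      rw [bval_eq_some p ⟨hv1.2.1, hv1.2.2.1, hv1.2.2.2.1, hv1.2.2.2.2⟩, hv1.1] at h2
      exact h2.symm
    have e2 : C₂ = some a' := by
      have h2 := hC₂ _ hc2
      simp only at h2
      rw [bval_eq_some p ⟨hv2.2.1, hv2.2.2.1, hv2.2.2.2.1, hv2.2.2.2.2⟩, hv2.1] at h2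
      exact h2.symm
    rw [e1, e2]
    intro hcon
    have : a = a' := by exact Option.some_injective _ hcon
    exact hne (by rw [this])

end PicGlue


section PicGlue2

open Relation

variable {A : Type*}

lemma some_ne_iff' {a b : A} (h : (some a : Option A) ≠ some b) : a ≠ b :=
  fun hab => h (congrArg some hab)

lemma hrel_cells (p : Pic A) {a b : A} (h : Hrel p.tiles (some a) (some b)) :
    a ≠ b ∧ ∃ i j, (1 ≤ i ∧ i ≤ p.rows ∧ 1 ≤ j ∧ j + 1 ≤ p.cols) ∧
      pval p i j = a ∧ pval p i (j+1) = b := by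
  obtain ⟨hne, t, ⟨i, j, hi, hj, rfl⟩, hc⟩ := h
  refine ⟨some_ne_iff' hne, ?_⟩
  rcases hc with ⟨h1, h2⟩ | ⟨h1, h2⟩
  · obtain ⟨hb1, hv1⟩ := (bval_some_iff p).1 h1
    obtain ⟨hb2, hv2⟩ := (bval_some_iff p).1 h2
    exact ⟨i, j, ⟨hb1.1, hb1.2.1, hb1.2.2.1, hb2.2.2.2⟩, hv1, hv2⟩
  · obtain ⟨hb1, hv1⟩ := (bval_some_iff p).1 h1
    obtain ⟨hb2, hv2⟩ := (bval_some_iff p).1 h2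
    exact ⟨i+1, j, ⟨hb1.1, hb1.2.1, hb1.2.2.1, hb2.2.2.2⟩, hv1, hv2⟩

lemma vrel_cells (p : Pic A) {a b : A} (h : Vrel p.tiles (some a) (some b)) :
    a ≠ b ∧ ∃ i j, (1 ≤ i ∧ i + 1 ≤ p.rows ∧ 1 ≤ j ∧ j ≤ p.cols) ∧
      pval p i j = a ∧ pval p (i+1) j = b := by
  obtain ⟨hne, t, ⟨i, j, hi, hj, rfl⟩, hc⟩ := h
  refine ⟨some_ne_iff' hne, ?_⟩
  rcases hc with ⟨h1, h2⟩ | ⟨h1, h2⟩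
  · obtain ⟨hb1, hv1⟩ := (bval_some_iff p).1 h1
    obtain ⟨hb2, hv2⟩ := (bval_some_iff p).1 h2
    exact ⟨i, j, ⟨hb1.1, hb2.2.1, hb1.2.2.1, hb1.2.2.2⟩, hv1, hv2⟩
  · obtain ⟨hb1, hv1⟩ := (bval_some_iff p).1 h1
    obtain ⟨hb2, hv2⟩ := (bval_some_iff p).1 h2
    exact ⟨i, j+1, ⟨hb1.1, hb2.2.1, hb1.2.2.1, hb1.2.2.2⟩, hv1, hv2⟩

lemma tile_mem (p : Pic A) {i j : ℕ} (hi : i ≤ p.rows) (hj : j ≤ p.cols) :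
    (p.bval i j, p.bval i (j + 1), p.bval (i + 1) j, p.bval (i + 1) (j + 1)) ∈ p.tiles :=
  ⟨i, j, hi, hj, rfl⟩

lemma hrel_of_cells (p : Pic A) {i j : ℕ}
    (hb : 1 ≤ i ∧ i ≤ p.rows ∧ 1 ≤ j ∧ j + 1 ≤ p.cols)
    (hne : pval p i j ≠ pval p i (j+1)) :
    Hrel p.tiles (some (pval p i j)) (some (pval p i (j+1))) := by
  refine ⟨fun h => hne (Option.some_injective _ h), _,
    tile_mem p (show i ≤ p.rows by omega) (show j ≤ p.cols by omega), Or.inl ⟨?_, ?_⟩⟩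
  · exact bval_eq_some p ⟨hb.1, hb.2.1, hb.2.2.1, by omega⟩
  · exact bval_eq_some p ⟨hb.1, hb.2.1, by omega, hb.2.2.2⟩

lemma vrel_of_cells (p : Pic A) {i j : ℕ}
    (hb : 1 ≤ i ∧ i + 1 ≤ p.rows ∧ 1 ≤ j ∧ j ≤ p.cols)
    (hne : pval p i j ≠ pval p (i+1) j) :
    Vrel p.tiles (some (pval p i j)) (some (pval p (i+1) j)) := by
  refine ⟨fun h => hne (Option.some_injective _ h), _,
    tile_mem p (show i ≤ p.rows by omega) (show j ≤ p.cols by omega), Or.inl ⟨?_, ?_⟩⟩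
  · exact bval_eq_some p ⟨hb.1, by omega, hb.2.2.1, hb.2.2.2⟩
  · exact bval_eq_some p ⟨by omega, hb.2.1, hb.2.2.1, hb.2.2.2⟩

lemma arel_of_H (p : Pic A) {i j : ℕ}
    (hb : 1 ≤ i ∧ i ≤ p.rows ∧ 1 ≤ j ∧ j + 1 ≤ p.cols)
    (hne : pval p i j ≠ pval p i (j+1)) :
    Arel p.tiles (pval p i j) (pval p i (j+1)) := Or.inl (hrel_of_cells p hb hne)

lemma arel_of_V (p : Pic A) {i j : ℕ}
    (hb : 1 ≤ i ∧ i + 1 ≤ p.rows ∧ 1 ≤ j ∧ j ≤ p.cols)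
    (hne : pval p i j ≠ pval p (i+1) j) :
    Arel p.tiles (pval p i j) (pval p (i+1) j) := Or.inr (vrel_of_cells p hb hne)

lemma a'rel_of_H (p : Pic A) {i j : ℕ}
    (hb : 1 ≤ i ∧ i ≤ p.rows ∧ 1 ≤ j ∧ j + 1 ≤ p.cols)
    (hne : pval p i j ≠ pval p i (j+1)) :
    A'rel p.tiles (pval p i (j+1)) (pval p i j) := Or.inl (hrel_of_cells p hb hne)

lemma a'rel_of_V (p : Pic A) {i j : ℕ}
    (hb : 1 ≤ i ∧ i + 1 ≤ p.rows ∧ 1 ≤ j ∧ j ≤ p.cols)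
    (hne : pval p i j ≠ pval p (i+1) j) :
    A'rel p.tiles (pval p i j) (pval p (i+1) j) := Or.inr (vrel_of_cells p hb hne)

/-- Part 1 : rectangular level sets imply that the tile set is simple regional. -/
lemma simple_of_rectLevels (p : Pic A) (h : RectLevels p) : SimpleRegional p.tiles := by
  classical
  have h' : ∀ a, ∃ x y x' y', POcc p a →
      1 ≤ x ∧ x ≤ x' ∧ x' ≤ p.rows ∧ 1 ≤ y ∧ y ≤ y' ∧ y' ≤ p.cols ∧
      ∀ i j, (pval p i j = a ∧ 1 ≤ i ∧ i ≤ p.rows ∧ 1 ≤ j ∧ j ≤ p.cols) ↔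
        (x ≤ i ∧ i ≤ x' ∧ y ≤ j ∧ j ≤ y') := by
    intro a
    by_cases ha : POcc p a
    · obtain ⟨x, y, x', y', hs⟩ := h a ha
      exact ⟨x, y, x', y', fun _ => hs⟩
    · exact ⟨0, 0, 0, 0, fun hc => absurd hc ha⟩
  choose Xf Yf Xf' Yf' hspec using h'
  have hown : ∀ a, POcc p a → ∀ i j, Xf a ≤ i → i ≤ Xf' a → Yf a ≤ j → j ≤ Yf' a →
      pval p i j = a := by
    intro a ha i j h1 h2 h3 h4
    exact (((hspec a ha).2.2.2.2.2.2 i j).2 ⟨h1, h2, h3, h4⟩).1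
  have hocc : ∀ i j, 1 ≤ i → i ≤ p.rows → 1 ≤ j → j ≤ p.cols →
      POcc p (pval p i j) ∧ Xf (pval p i j) ≤ i ∧ i ≤ Xf' (pval p i j) ∧
        Yf (pval p i j) ≤ j ∧ j ≤ Yf' (pval p i j) := by
    intro i j h1 h2 h3 h4
    have ha : POcc p (pval p i j) := ⟨i, j, ⟨h1, h2, h3, h4⟩, rfl⟩
    have := ((hspec _ ha).2.2.2.2.2.2 i j).1 ⟨rfl, h1, h2, h3, h4⟩
    exact ⟨ha, this.1, this.2.1, this.2.2.1, this.2.2.2⟩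
  have hb : ∀ a, POcc p a → 1 ≤ Xf a ∧ Xf a ≤ Xf' a ∧ Xf' a ≤ p.rows ∧
      1 ≤ Yf a ∧ Yf a ≤ Yf' a ∧ Yf' a ≤ p.cols := by
    intro a ha
    obtain ⟨h1, h2, h3, h4, h5, h6, -⟩ := hspec a ha
    exact ⟨h1, h2, h3, h4, h5, h6⟩
  constructor
  · -- A_θ is acyclic
    intro s hTG
    refine RLCore2.core_acyclic p.rows p.cols (POcc p) Xf Xf' Yf Yf' (pval p)
      hb hown hocc s (Relation.TransGen.mono ?_ s s hTG)
    intro u v huv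
    rcases huv with hH | hV
    · obtain ⟨hne, i, j, hbnd, hu, hv⟩ := hrel_cells p hH
      have hE := RLCore2.edgeH p.rows p.cols (POcc p) Xf Xf' Yf Yf' (pval p) hown hocc
        hbnd.1 hbnd.2.1 hbnd.2.2.1 hbnd.2.2.2 (by rw [hu, hv]; exact hne)
      rw [hu, hv] at hE
      exact hE
    · obtain ⟨hne, i, j, hbnd, hu, hv⟩ := vrel_cells p hV
      have hE := RLCore2.edgeV p.rows p.cols (POcc p) Xf Xf' Yf Yf' (pval p) hown hocc
        hbnd.1 hbnd.2.1 hbnd.2.2.1 hbnd.2.2.2 (by rw [hu, hv]; exact hne)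
      rw [hu, hv] at hE
      exact hE
  · -- A'_θ is acyclic, via the column-mirrored picture
    intro s hTG
    set n := p.cols with hn
    have hb_m : ∀ a, POcc p a → 1 ≤ Xf a ∧ Xf a ≤ Xf' a ∧ Xf' a ≤ p.rows ∧
        1 ≤ n + 1 - Yf' a ∧ n + 1 - Yf' a ≤ n + 1 - Yf a ∧ n + 1 - Yf a ≤ n := by
      intro a ha
      obtain ⟨h1, h2, h3, h4, h5, h6⟩ := hb a ha
      refine ⟨h1, h2, h3, by omega, by omega, by omega⟩
    have hown_m : ∀ a, POcc p a → ∀ i j, Xf a ≤ i → i ≤ Xf' a →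
        n + 1 - Yf' a ≤ j → j ≤ n + 1 - Yf a → pval p i (n + 1 - j) = a := by
      intro a ha i j h1 h2 h3 h4
      obtain ⟨b1, b2, b3, b4, b5, b6⟩ := hb a ha
      exact hown a ha i (n + 1 - j) h1 h2 (by omega) (by omega)
    have hocc_m : ∀ i j, 1 ≤ i → i ≤ p.rows → 1 ≤ j → j ≤ n →
        POcc p (pval p i (n + 1 - j)) ∧ Xf (pval p i (n + 1 - j)) ≤ i ∧
          i ≤ Xf' (pval p i (n + 1 - j)) ∧
          n + 1 - Yf' (pval p i (n + 1 - j)) ≤ j ∧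
          j ≤ n + 1 - Yf (pval p i (n + 1 - j)) := by
      intro i j h1 h2 h3 h4
      obtain ⟨ho, o1, o2, o3, o4⟩ := hocc i (n + 1 - j) h1 h2 (by omega) (by omega)
      obtain ⟨b1, b2, b3, b4, b5, b6⟩ := hb _ ho
      exact ⟨ho, o1, o2, by omega, by omega⟩
    refine RLCore2.core_acyclic p.rows n (POcc p) Xf Xf'
      (fun a => n + 1 - Yf' a) (fun a => n + 1 - Yf a)
      (fun i j => pval p i (n + 1 - j))
      hb_m hown_m hocc_m s (Relation.TransGen.mono ?_ s s hTG)
    intro u v huv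
    rcases huv with hH | hV
    · -- Hrel (some v) (some u) : v is left of u
      obtain ⟨hne, i, j, hbnd, hv, hu⟩ := hrel_cells p hH
      have e1 : pval p i (n + 1 - (n - j)) = u := by
        rw [show n + 1 - (n - j) = j + 1 by omega]; exact hu
      have e2 : pval p i (n + 1 - (n - j + 1)) = v := by
        rw [show n + 1 - (n - j + 1) = j by omega]; exact hv
      have hE := RLCore2.edgeH p.rows n (POcc p) Xf Xf'
        (fun a => n + 1 - Yf' a) (fun a => n + 1 - Yf a)
        (fun i j => pval p i (n + 1 - j)) hown_m hocc_m
        (i := i) (j := n - j) hbnd.1 hbnd.2.1 (by omega) (by omega)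
        (by rw [e1, show n - j + 1 = n - j + 1 from rfl, e2]; exact fun hh => hne (hh.symm))
      rw [e1, e2] at hE
      exact hE
    · obtain ⟨hne, i, j, hbnd, hu, hv⟩ := vrel_cells p hV
      have e1 : pval p i (n + 1 - (n + 1 - j)) = u := by
        rw [show n + 1 - (n + 1 - j) = j by omega]; exact hu
      have e2 : pval p (i+1) (n + 1 - (n + 1 - j)) = v := by
        rw [show n + 1 - (n + 1 - j) = j by omega]; exact hv
      have hE := RLCore2.edgeV p.rows n (POcc p) Xf Xf'
        (fun a => n + 1 - Yf' a) (fun a => n + 1 - Yf a)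
        (fun i j => pval p i (n + 1 - j)) hown_m hocc_m
        (i := i) (j := n + 1 - j) hbnd.1 hbnd.2.1 (by omega) (by omega)
        (by rw [e1, e2]; exact hne)
      rw [e1, e2] at hE
      exact hE

end PicGlue2


section PicGlue3

open Relation

variable {A : Type*}

lemma stair_row (p : Pic A) (i j : ℕ) (h1i : 1 ≤ i) (him : i ≤ p.rows) (h1j : 1 ≤ j) :
    ∀ k, j + k ≤ p.cols →
      ReflTransGen (Arel p.tiles) (pval p i j) (pval p i (j+k)) := by
  intro k
  induction k with
  | zero => intro _; exact ReflTransGen.refl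
  | succ k ih =>
    intro hk
    have ih' := ih (by omega)
    by_cases heq : pval p i (j+k+1) = pval p i (j+k)
    · rw [show j + (k+1) = j + k + 1 from rfl, heq]
      exact ih'
    · exact ReflTransGen.tail ih'
        (arel_of_H p ⟨h1i, him, by omega, by omega⟩ (fun hh => heq hh.symm))

lemma stair_col (p : Pic A) (i j : ℕ) (h1i : 1 ≤ i) (h1j : 1 ≤ j) (hjn : j ≤ p.cols) :
    ∀ k, i + k ≤ p.rows →
      ReflTransGen (Arel p.tiles) (pval p i j) (pval p (i+k) j) := by
  intro k
  induction k with
  | zero => intro _; exact ReflTransGen.refl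
  | succ k ih =>
    intro hk
    have ih' := ih (by omega)
    by_cases heq : pval p (i+k+1) j = pval p (i+k) j
    · rw [show i + (k+1) = i + k + 1 from rfl, heq]
      exact ih'
    · exact ReflTransGen.tail ih'
        (arel_of_V p ⟨by omega, by omega, h1j, hjn⟩ (fun hh => heq hh.symm))

lemma stairA (p : Pic A) (i j i' j' : ℕ) (h1i : 1 ≤ i) (hii : i ≤ i') (him : i' ≤ p.rows)
    (h1j : 1 ≤ j) (hjj : j ≤ j') (hjn : j' ≤ p.cols) :
    ReflTransGen (Arel p.tiles) (pval p i j) (pval p i' j') := by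
  have h1 := stair_row p i j h1i (by omega) h1j (j' - j) (by omega)
  have h2 := stair_col p i j' h1i (by omega) hjn (i' - i) (by omega)
  rw [show j + (j' - j) = j' by omega] at h1
  rw [show i + (i' - i) = i' by omega] at h2
  exact h1.trans h2

lemma stair_row' (p : Pic A) (i j : ℕ) (h1i : 1 ≤ i) (him : i ≤ p.rows) (hjn : j ≤ p.cols) :
    ∀ k, k < j →
      ReflTransGen (A'rel p.tiles) (pval p i j) (pval p i (j - k)) := by
  intro k
  induction k with
  | zero => intro _; exact ReflTransGen.refl
  | succ k ih =>
    intro hk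
    have ih' := ih (by omega)
    by_cases heq : pval p i (j - (k+1)) = pval p i (j - k)
    · rw [heq]; exact ih'
    · refine ReflTransGen.tail ih' ?_
      have hr : j - (k+1) + 1 = j - k := by omega
      have hE := a'rel_of_H p (i := i) (j := j - (k+1))
        ⟨h1i, him, by omega, by omega⟩ (by rw [hr]; exact heq)
      rw [hr] at hE
      exact hE

lemma stair_col' (p : Pic A) (i j : ℕ) (h1i : 1 ≤ i) (h1j : 1 ≤ j) (hjn : j ≤ p.cols) :
    ∀ k, i + k ≤ p.rows →
      ReflTransGen (A'rel p.tiles) (pval p i j) (pval p (i+k) j) := by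
  intro k
  induction k with
  | zero => intro _; exact ReflTransGen.refl
  | succ k ih =>
    intro hk
    have ih' := ih (by omega)
    by_cases heq : pval p (i+k+1) j = pval p (i+k) j
    · rw [show i + (k+1) = i + k + 1 from rfl, heq]
      exact ih'
    · exact ReflTransGen.tail ih'
        (a'rel_of_V p ⟨by omega, by omega, h1j, hjn⟩ (fun hh => heq hh.symm))

lemma stairA' (p : Pic A) (i j i' j' : ℕ) (h1i : 1 ≤ i) (hii : i ≤ i') (him : i' ≤ p.rows)
    (h1j : 1 ≤ j') (hjj : j' ≤ j) (hjn : j ≤ p.cols) :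
    ReflTransGen (A'rel p.tiles) (pval p i j) (pval p i' j') := by
  have h1 := stair_row' p i j h1i (by omega) hjn (j - j') (by omega)
  have h2 := stair_col' p i j' h1i h1j (by omega) (i' - i) (by omega)
  rw [show j - (j - j') = j' by omega] at h1
  rw [show i + (i' - i) = i' by omega] at h2
  exact h1.trans h2

/-- Part 2 : if the tile set is simple regional, every level set is a rectangle. -/
lemma rectLevels_of_simple (p : Pic A) (hs : SimpleRegional p.tiles) : RectLevels p := by
  obtain ⟨hA, hA'⟩ := hs
  intro a ha
  obtain ⟨i0, j0, hb0, hv0⟩ := ha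
  set m := p.rows with hm
  set n := p.cols with hn
  set RS : Set ℕ := {i | ∃ j, (1 ≤ i ∧ i ≤ m ∧ 1 ≤ j ∧ j ≤ n) ∧ pval p i j = a} with hRS
  set CS : Set ℕ := {j | ∃ i, (1 ≤ i ∧ i ≤ m ∧ 1 ≤ j ∧ j ≤ n) ∧ pval p i j = a} with hCS
  have hRSne : RS.Nonempty := ⟨i0, j0, hb0, hv0⟩
  have hCSne : CS.Nonempty := ⟨j0, i0, hb0, hv0⟩
  have hRSbdd : BddAbove RS := ⟨m, fun i hi => by obtain ⟨j, hb, -⟩ := hi; exact hb.2.1⟩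
  have hCSbdd : BddAbove CS := ⟨n, fun j hj => by obtain ⟨i, hb, -⟩ := hj; exact hb.2.2.2⟩
  have hx : sInf RS ∈ RS := Nat.sInf_mem hRSne
  have hx' : sSup RS ∈ RS := Nat.sSup_mem hRSne hRSbdd
  have hy : sInf CS ∈ CS := Nat.sInf_mem hCSne
  have hy' : sSup CS ∈ CS := Nat.sSup_mem hCSne hCSbdd
  obtain ⟨jt, hbt, hvt⟩ := hx
  obtain ⟨jb, hbb, hvb⟩ := hx'
  obtain ⟨il, hbl, hvl⟩ := hy
  obtain ⟨ir, hbr, hvr⟩ := hy'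
  have hxle : sInf RS ≤ i0 := Nat.sInf_le ⟨j0, hb0, hv0⟩
  have hxle' : i0 ≤ sSup RS := le_csSup hRSbdd ⟨j0, hb0, hv0⟩
  have hyle : sInf CS ≤ j0 := Nat.sInf_le ⟨i0, hb0, hv0⟩
  have hyle' : j0 ≤ sSup CS := le_csSup hCSbdd ⟨i0, hb0, hv0⟩
  refine ⟨sInf RS, sInf CS, sSup RS, sSup CS, hbt.1, by omega, hbb.2.1, hbl.2.2.1,
    by omega, hbr.2.2.2, ?_⟩
  intro zi zj
  constructor
  · rintro ⟨hv, hb1, hb2, hb3, hb4⟩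
    exact ⟨Nat.sInf_le ⟨zj, ⟨hb1, hb2, hb3, hb4⟩, hv⟩,
      le_csSup hRSbdd ⟨zj, ⟨hb1, hb2, hb3, hb4⟩, hv⟩,
      Nat.sInf_le ⟨zi, ⟨hb1, hb2, hb3, hb4⟩, hv⟩,
      le_csSup hCSbdd ⟨zi, ⟨hb1, hb2, hb3, hb4⟩, hv⟩⟩
  · rintro ⟨hz1, hz2, hz3, hz4⟩
    have hzb : 1 ≤ zi ∧ zi ≤ m ∧ 1 ≤ zj ∧ zj ≤ n := by
      refine ⟨by omega, by omega, by omega, by omega⟩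
    refine ⟨?_, hzb.1, hzb.2.1, hzb.2.2.1, hzb.2.2.2⟩
    by_contra hba
    -- quadrant analysis
    set UL : Prop := ∃ u v, ((1 ≤ u ∧ u ≤ m ∧ 1 ≤ v ∧ v ≤ n) ∧ pval p u v = a) ∧
      u ≤ zi ∧ v ≤ zj with hULdef
    set UR : Prop := ∃ u v, ((1 ≤ u ∧ u ≤ m ∧ 1 ≤ v ∧ v ≤ n) ∧ pval p u v = a) ∧
      u ≤ zi ∧ zj ≤ v with hURdef
    set DL : Prop := ∃ u v, ((1 ≤ u ∧ u ≤ m ∧ 1 ≤ v ∧ v ≤ n) ∧ pval p u v = a) ∧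
      zi ≤ u ∧ v ≤ zj with hDLdef
    set DR : Prop := ∃ u v, ((1 ≤ u ∧ u ≤ m ∧ 1 ≤ v ∧ v ≤ n) ∧ pval p u v = a) ∧
      zi ≤ u ∧ zj ≤ v with hDRdef
    have hcases : (UL ∧ DR) ∨ (UR ∧ DL) := by
      by_cases hUL : UL
      · by_cases hDR : DR
        · exact Or.inl ⟨hUL, hDR⟩
        · refine Or.inr ⟨?_, ?_⟩
          · rcases le_or_gt ir zi with hh | hh
            · exact ⟨ir, sSup CS, ⟨hbr, hvr⟩, hh, by omega⟩
            · exact absurd ⟨ir, sSup CS, ⟨hbr, hvr⟩, by omega, by omega⟩ hDR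
          · rcases le_or_gt jb zj with hh | hh
            · exact ⟨sSup RS, jb, ⟨hbb, hvb⟩, by omega, hh⟩
            · exact absurd ⟨sSup RS, jb, ⟨hbb, hvb⟩, by omega, by omega⟩ hDR
      · refine Or.inr ⟨?_, ?_⟩
        · rcases le_or_gt jt zj with hh | hh
          · exact absurd ⟨sInf RS, jt, ⟨hbt, hvt⟩, by omega, hh⟩ hUL
          · exact ⟨sInf RS, jt, ⟨hbt, hvt⟩, by omega, by omega⟩
        · rcases le_or_gt il zi with hh | hh
          · exact absurd ⟨il, sInf CS, ⟨hbl, hvl⟩, hh, by omega⟩ hUL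
          · exact ⟨il, sInf CS, ⟨hbl, hvl⟩, by omega, by omega⟩
    rcases hcases with ⟨⟨u1, v1, ⟨hq1b, hq1v⟩, hq1i, hq1j⟩, ⟨u2, v2, ⟨hq2b, hq2v⟩, hq2i, hq2j⟩⟩ |
        ⟨⟨u1, v1, ⟨hq1b, hq1v⟩, hq1i, hq1j⟩, ⟨u2, v2, ⟨hq2b, hq2v⟩, hq2i, hq2j⟩⟩
    · -- cycle in Arel
      have path1 := stairA p u1 v1 zi zj hq1b.1 hq1i hzb.2.1 hq1b.2.2.1 hq1j hzb.2.2.2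
      have path2 := stairA p zi zj u2 v2 hzb.1 hq2i hq2b.2.1 hzb.2.2.1 hq2j hq2b.2.2.2
      rw [hq1v] at path1
      rw [hq2v] at path2
      have hTG : Relation.TransGen (Arel p.tiles) a a := by
        rcases (Relation.reflTransGen_iff_eq_or_transGen.1 path1) with heq | hT
        · exact absurd heq hba
        · exact Relation.TransGen.trans_left hT path2
      exact hA a hTG
    · -- cycle in A'rel
      have path1 := stairA' p u1 v1 zi zj hq1b.1 hq1i hzb.2.1 hzb.2.2.1 hq1j hq1b.2.2.2
      have path2 := stairA' p zi zj u2 v2 hzb.1 hq2i hq2b.2.1 hq2b.2.2.1 hq2j hzb.2.2.2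
      rw [hq1v] at path1
      rw [hq2v] at path2
      have hTG : Relation.TransGen (A'rel p.tiles) a a := by
        rcases (Relation.reflTransGen_iff_eq_or_transGen.1 path1) with heq | hT
        · exact absurd heq hba
        · exact Relation.TransGen.trans_left hT path2
      exact hA' a hTG

end PicGlue3


/-- Let `p` be a picture and `θ = ⟦p̂⟧` the set of all tiles of
its bordered version.  Then `p̂` is regional iff the incidence graphs of both
adjacency relations `A_θ ∩ Σ²` and `A'_θ ∩ Σ²` are acyclic. -/
theorem regional_iff_simple_regional_tileset {A : Type*} (p : Pic A) :
    p.IsRegional ↔ SimpleRegional p.tiles := by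
  constructor
  · intro h
    exact simple_of_rectLevels p (rectLevels_of_regional p h)
  · intro h
    exact regional_of_rectLevels p (rectLevels_of_simple p h)
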